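/- Given a descending multiplication on 𝔽₂ⁿ, let π be the map defined by π(∑_{i∈S} eᵢ) = ∑_{∅≠T⊆S} ∏_{i∈T} eᵢ for every S ⊆ [n]. Then the operation obtained from π by setting eᵢeⱼ := π(eᵢ+eⱼ) + eᵢ + eⱼ and extending bilinearly coincides with the original descending multiplication. -/

import Mathlib

/-! Common framework: qubit gates, the Pauli group, the Clifford hierarchy,
permutation gates, Toffoli gates and staircase form, descending multiplications,
multilinear polynomial representations. -/

/-- Vectors in `𝔽₂ⁿ`, indexing computational basis states. -/
abbrev QV (n : ℕ) := Fin n → ZMod 2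

/-- `n`-qubit gates: `2ⁿ × 2ⁿ` complex matrices indexed by `𝔽₂ⁿ`. -/
abbrev QMat (n : ℕ) := Matrix (QV n) (QV n) ℂ

/-- Standard basis vector `eᵢ` of `𝔽₂ⁿ`. -/
def stdBasis (n : ℕ) (i : Fin n) : QV n := fun m => if m = i then 1 else 0

/-- The gate `X^u Z^z`, sending `|b⟩` to `(-1)^(z·b) |b+u⟩`. -/
noncomputable def XZGate (n : ℕ) (u z : QV n) : QMat n :=
  fun a b => if a = b + u then (-1 : ℂ) ^ (∑ i, (z i).val * (b i).val) else 0

/-- The Pauli group on `n` qubits: gates `c·P₁⊗⋯⊗Pₙ`, `c ∈ {±1, ±i}`,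
`Pᵢ ∈ {I,X,Y,Z}`, equivalently phases times `X^u Z^z`. -/
def PauliGroup (n : ℕ) : Set (QMat n) :=
  { P | ∃ (c : ℂ) (u z : QV n),
      (c = 1 ∨ c = -1 ∨ c = Complex.I ∨ c = -Complex.I) ∧ P = c • XZGate n u z }

/-- Level `k` of the Clifford hierarchy `𝒞ₖ` (level 1 is the Pauli group,
level 2 the Clifford group; level 0 is junk/empty). -/
def CliffordLevel (n : ℕ) : ℕ → Set (QMat n)
  | 0 => ∅
  | 1 => PauliGroup n
  | (k+2) => { U | U ∈ Matrix.unitaryGroup (QV n) ℂ ∧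
      ∀ P ∈ PauliGroup n, U * P * star U ∈ CliffordLevel n (k+1) }

/-- The permutation gate of a permutation `f` of `𝔽₂ⁿ`: sends `|v⟩` to `|f v⟩`. -/
noncomputable def permGate (n : ℕ) (f : QV n ≃ QV n) : QMat n :=
  fun a b => if a = f b then 1 else 0

/-- A diagonal gate. -/
def IsDiagonal (n : ℕ) (d : QMat n) : Prop := ∀ a b : QV n, a ≠ b → d a b = 0

/-- A gate is semi-Clifford if it equals `φ₁ d φ₂` for Clifford `φ₁, φ₂` and diagonal `d`. -/
def IsSemiClifford (n : ℕ) (U : QMat n) : Prop :=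
  ∃ φ₁ d φ₂ : QMat n, φ₁ ∈ CliffordLevel n 2 ∧ φ₂ ∈ CliffordLevel n 2 ∧
    IsDiagonal n d ∧ U = φ₁ * d * φ₂

/-- The underlying map of the Toffoli gate `TOF_{i,j,k}`: `v ↦ v + (vᵢvⱼ)·eₖ`. -/
def tofFun (n : ℕ) (i j k : Fin n) (v : QV n) : QV n :=
  fun m => if m = k then v m + v i * v j else v m

/-- A map on `𝔽₂ⁿ` is in staircase form if it is a product (applied left-to-right)
of pairwise distinct Toffoli gates `TOF_{i,j,k}` with `i<j<k` and with targets
nondecreasing in the order the gates are applied. -/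
def IsStaircase (n : ℕ) (g : QV n → QV n) : Prop :=
  ∃ L : List (Fin n × Fin n × Fin n),
    L.Nodup ∧
    (∀ t ∈ L, t.1 < t.2.1 ∧ t.2.1 < t.2.2) ∧
    List.Chain' (fun s t => s.2.2 ≤ t.2.2) L ∧
    g = fun v => L.foldl (fun w t => tofFun n t.1 t.2.1 t.2.2 w) v

/-- A descending multiplication on `𝔽₂ⁿ`: bilinear, associative, commutative,
`eᵢeᵢ = 0`, and for `i < j`, `eᵢeⱼ ∈ span{eₖ : k > j}`. -/
def IsDescendingMul (n : ℕ) (mul : QV n → QV n → QV n) : Prop :=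
  (∀ u v w : QV n, mul (u + v) w = mul u w + mul v w) ∧
  (∀ u v w : QV n, mul u (v + w) = mul u v + mul u w) ∧
  (∀ u v w : QV n, mul (mul u v) w = mul u (mul v w)) ∧
  (∀ u v : QV n, mul u v = mul v u) ∧
  (∀ i : Fin n, mul (stdBasis n i) (stdBasis n i) = 0) ∧
  (∀ i j : Fin n, i < j → ∀ m : Fin n, m ≤ j → mul (stdBasis n i) (stdBasis n j) m = 0)

/-- The product `∏_{i ∈ l} eᵢ` under a multiplication, for a list `l` (junk `0` on `[]`). -/
def dmProdList (n : ℕ) (mul : QV n → QV n → QV n) : List (Fin n) → QV n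
  | [] => 0
  | [i] => stdBasis n i
  | i :: j :: rest => mul (stdBasis n i) (dmProdList n mul (j :: rest))

/-- The product `∏_{i ∈ T} eᵢ` under a multiplication. -/
def dmProd (n : ℕ) (mul : QV n → QV n → QV n) (T : Finset (Fin n)) : QV n :=
  dmProdList n mul (T.sort (· ≤ ·))

/-- `g` is the map `∑_{i∈S} eᵢ ↦ ∑_{∅≠T⊆S} ∏_{i∈T} eᵢ` associated to a multiplication. -/
def dmPiSpec (n : ℕ) (mul : QV n → QV n → QV n) (g : QV n → QV n) : Prop :=
  ∀ S : Finset (Fin n),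
    g (∑ i ∈ S, stdBasis n i) = ∑ T ∈ S.powerset.erase ∅, dmProd n mul T

/-- The bilinear extension of `eᵢeⱼ := g(eᵢ+eⱼ) + eᵢ + eⱼ`. -/
def inducedMul (n : ℕ) (g : QV n → QV n) (u v : QV n) : QV n :=
  ∑ i : Fin n, ∑ j : Fin n,
    (u i * v j) • (g (stdBasis n i + stdBasis n j) + stdBasis n i + stdBasis n j)

/-- Coefficient of the monomial `∏_{i∈T} aᵢ` in the unique multilinear polynomial
over `𝔽₂` representing `g : 𝔽₂ⁿ → 𝔽₂` (Möbius inversion over `𝔽₂`). -/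
def mlCoeff (n : ℕ) (g : QV n → ZMod 2) (T : Finset (Fin n)) : ZMod 2 :=
  ∑ R ∈ T.powerset, g (∑ i ∈ R, stdBasis n i)

/-- Strictly lower triangular matrix. -/
def StrictLowerTri (n : ℕ) (A : Matrix (Fin n) (Fin n) (ZMod 2)) : Prop :=
  ∀ p q : Fin n, p ≤ q → A p q = 0

/-- Multiplication of basis vectors for the gate `U_k`: the basis of `𝔽₂^(2^k-1)` is
indexed by nonempty subsets `S ⊆ [k]`, encoded as indices `a` via the binary digits of
`a+1`; `e_S e_T = e_{S∪T}` if `S ∩ T = ∅` and `e_S e_T = 0` otherwise. -/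
def ukBasisMul (k : ℕ) (a b : Fin (2 ^ k - 1)) : QV (2 ^ k - 1) :=
  if (a.val + 1) &&& (b.val + 1) = 0 then
    (if h : a.val + b.val + 1 < 2 ^ k - 1 then stdBasis (2 ^ k - 1) ⟨a.val + b.val + 1, h⟩
     else 0)
  else 0

/-- The descending multiplication defining `U_k`, extended bilinearly. -/
def ukMul (k : ℕ) (u v : QV (2 ^ k - 1)) : QV (2 ^ k - 1) :=
  ∑ a : Fin (2 ^ k - 1), ∑ b : Fin (2 ^ k - 1), (u a * v b) • ukBasisMul k a b


section Aux

variable {n : ℕ}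

private lemma qv_add_self (x : QV n) : x + x = 0 := by
  funext m; exact CharTwo.add_self_eq_zero _

private lemma zmod2_cases : ∀ c : ZMod 2, c = 0 ∨ c = 1 := by decide

private lemma basis_decomp (u : QV n) : u = ∑ i : Fin n, u i • stdBasis n i := by
  funext m
  simp [stdBasis, Finset.sum_apply]

private lemma powerset_pair {i j : Fin n} (h : i ≠ j) :
    ({i,j} : Finset (Fin n)).powerset = {∅, {i}, {j}, {i,j}} := by
  ext T
  simp only [Finset.mem_powerset, Finset.mem_insert, Finset.mem_singleton]
  constructor
  · intro hT
    by_cases hi : i ∈ T <;> by_cases hj : j ∈ T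
    · right; right; right
      apply Finset.Subset.antisymm hT
      intro x hx; simp at hx; rcases hx with rfl | rfl <;> assumption
    · right; left
      apply Finset.Subset.antisymm
      · intro x hx
        rcases Finset.mem_insert.mp (hT hx) with rfl | hx'
        · exact Finset.mem_singleton_self _
        · exact absurd (Finset.mem_singleton.mp hx' ▸ hx) hj
      · simpa using hi
    · right; right; left
      apply Finset.Subset.antisymm
      · intro x hx
        rcases Finset.mem_insert.mp (hT hx) with rfl | hx'
        · exact absurd hx hi
        · exact hx'
      · simpa using hj
    · left
      ext x; simp; intro hx
      rcases Finset.mem_insert.mp (hT hx) with rfl | hx'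
      · exact hi hx
      · exact hj (Finset.mem_singleton.mp hx' ▸ hx)
  · rintro (rfl | rfl | rfl | rfl) <;> intro x hx <;> simp_all

private lemma powerset_pair_erase {i j : Fin n} (h : i ≠ j) :
    ({i,j} : Finset (Fin n)).powerset.erase ∅ = {{i}, {j}, {i,j}} := by
  rw [powerset_pair h]
  ext T
  simp only [Finset.mem_erase, Finset.mem_insert, Finset.mem_singleton]
  constructor
  · rintro ⟨hne, h0 | h1 | h2 | h3⟩ <;> tauto
  · rintro (h1 | h2 | h3) <;> subst_vars <;>
      simp [Finset.singleton_ne_empty, Finset.insert_ne_empty]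

private lemma dmProd_singleton (mul : QV n → QV n → QV n) (i : Fin n) :
    dmProd n mul {i} = stdBasis n i := by
  simp [dmProd, Finset.sort_singleton, dmProdList]

private lemma dmProd_pair (mul : QV n → QV n → QV n) {i j : Fin n} (h : i < j) :
    dmProd n mul {i, j} = mul (stdBasis n i) (stdBasis n j) := by
  have hsort : ({i, j} : Finset (Fin n)).sort (· ≤ ·) = [i, j] := by
    rw [show ({i,j} : Finset (Fin n)) = insert i {j} from rfl,
      Finset.sort_insert _ (fun b hb => by simp at hb; subst hb; exact le_of_lt h)
        (by simp [Finset.mem_singleton, h.ne]),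
      Finset.sort_singleton]
  simp [dmProd, hsort, dmProdList]

end Aux

private lemma stmt3_aux (n : ℕ) (mul : QV n → QV n → QV n) (hmul : IsDescendingMul n mul)
    (g : QV n → QV n) (hg : dmPiSpec n mul g) :
    inducedMul n g = mul := by
  obtain ⟨addL, addR, _assoc, comm, sq, _desc⟩ := hmul
  -- mul is zero on 0
  have mul0L : ∀ v, mul 0 v = 0 := by
    intro v
    have h := addL 0 0 v
    rw [add_zero] at h
    exact (left_eq_add.mp h)
  -- smul compatibility
  have smulL : ∀ (c : ZMod 2) (u v : QV n), mul (c • u) v = c • mul u v := by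
    intro c u v
    rcases zmod2_cases c with rfl | rfl
    · simp [mul0L]
    · simp
  -- sums
  have sumL : ∀ (s : Finset (Fin n)) (f : Fin n → QV n) (v : QV n),
      mul (∑ i ∈ s, f i) v = ∑ i ∈ s, mul (f i) v := by
    intro s f v
    induction s using Finset.induction_on with
    | empty => simp [mul0L]
    | insert _ _ hx ih => rw [Finset.sum_insert hx, addL, ih, Finset.sum_insert hx]
  -- g at 0
  have g0 : g 0 = 0 := by
    have h := hg ∅
    simpa using h
  -- key pointwise formula
  have key : ∀ i j : Fin n,
      g (stdBasis n i + stdBasis n j) + stdBasis n i + stdBasis n j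
        = mul (stdBasis n i) (stdBasis n j) := by
    have hpair : ∀ i j : Fin n, i ≠ j →
        g (stdBasis n i + stdBasis n j)
          = stdBasis n i + stdBasis n j + mul (stdBasis n i) (stdBasis n j) := by
      intro i j hij
      have h := hg {i, j}
      rw [Finset.sum_pair hij, powerset_pair_erase hij] at h
      have h1 : ({i} : Finset (Fin n)) ≠ {j} := by
        simp [Finset.singleton_injective.ne_iff, hij]
      have h2 : ({i} : Finset (Fin n)) ≠ {i, j} := by
        intro hc
        have : j ∈ ({i} : Finset (Fin n)) := hc ▸ (by simp)
        simp at this; exact hij this.symm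
      have h3 : ({j} : Finset (Fin n)) ≠ {i, j} := by
        intro hc
        have : i ∈ ({j} : Finset (Fin n)) := hc ▸ (by simp)
        simp at this; exact hij this
      rw [Finset.sum_insert (by simp [h1, h2]), Finset.sum_insert (by simp [h3]),
        Finset.sum_singleton, dmProd_singleton, dmProd_singleton] at h
      rcases lt_or_gt_of_ne hij with hlt | hgt
      · rw [dmProd_pair mul hlt] at h
        rw [h]; abel
      · rw [show ({i,j} : Finset (Fin n)) = {j,i} from by ext x; simp; tauto,
          dmProd_pair mul hgt, comm (stdBasis n j)] at h
        rw [h]; abel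
    intro i j
    by_cases hij : i = j
    · subst hij
      rw [show stdBasis n i + stdBasis n i = 0 from qv_add_self _, g0, sq, zero_add,
        qv_add_self]
    · rw [hpair i j hij]
      have hz : ∀ a b c : ZMod 2, a + b + c + a + b = c := by decide
      funext m
      simpa using hz (stdBasis n i m) (stdBasis n j m)
        (mul (stdBasis n i) (stdBasis n j) m)
  -- conclude
  funext u v
  unfold inducedMul
  calc (∑ i : Fin n, ∑ j : Fin n,
        (u i * v j) • (g (stdBasis n i + stdBasis n j) + stdBasis n i + stdBasis n j))
      = ∑ i : Fin n, ∑ j : Fin n,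
          (u i * v j) • mul (stdBasis n i) (stdBasis n j) := by
        refine Finset.sum_congr rfl fun i _ => Finset.sum_congr rfl fun j _ => ?_
        rw [key i j]
    _ = mul u v := by
        conv_rhs => rw [basis_decomp u, basis_decomp v]
        rw [sumL]
        refine Finset.sum_congr rfl fun i _ => ?_
        rw [smulL, comm, sumL, Finset.smul_sum]
        refine Finset.sum_congr rfl fun j _ => ?_
        rw [smulL, comm, smul_smul]

/-- multiplication → permutation → multiplication is the identity. -/
theorem stmt3 (n : ℕ) (mul : QV n → QV n → QV n) (hmul : IsDescendingMul n mul)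
    (g : QV n → QV n) (hg : dmPiSpec n mul g) :
    inducedMul n g = mul := stmt3_aux n mul hmul g hg
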